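/- Let g : B → ℝ^D be continuous on a neighborhood B of 0 in ℝ^n, and let F be a family of continuous maps B → ℝ^D such that every point z in some neighborhood W of g(0) can be written as z = α₁f₁(0) + ... + α_k f_k(0) with f_i ∈ F and α_i > 0. Then there exist an open neighborhood B′ ⊆ B of 0, finitely many positive continuous functions a₁,...,a_ℓ on B′, and f₁,...,f_ℓ ∈ F with g(x) = a₁(x)f₁(x) + ... + a_ℓ(x)f_ℓ(x) for all x ∈ B′. -/

import Mathlib

open scoped BigOperators

/-- Günther's Lemma 2.3: if every point in a neighborhood of `g 0` is a positive
combination of values at `0` of maps from the family `F`, then on a small neighborhood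
of `0` the map `g` itself is a positive combination, with positive continuous
coefficient functions, of finitely many maps from `F`. -/
theorem gunther_positive_cone_lemma {n D : ℕ}
    (B : Set (Fin n → ℝ)) (hB : B ∈ nhds (0 : Fin n → ℝ))
    (g : (Fin n → ℝ) → (Fin D → ℝ)) (hg : ContinuousOn g B)
    (F : Set ((Fin n → ℝ) → (Fin D → ℝ)))
    (hF : ∀ f ∈ F, ContinuousOn f B)
    (hcone : ∃ W ∈ nhds (g 0), ∀ z ∈ W,
      ∃ (k : ℕ) (f : Fin k → ((Fin n → ℝ) → (Fin D → ℝ))) (α : Fin k → ℝ),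
        (∀ i, f i ∈ F) ∧ (∀ i, 0 < α i) ∧ z = ∑ i, α i • f i 0) :
    ∃ B' : Set (Fin n → ℝ), IsOpen B' ∧ (0 : Fin n → ℝ) ∈ B' ∧ B' ⊆ B ∧
      ∃ (ℓ : ℕ) (a : Fin ℓ → ((Fin n → ℝ) → ℝ)) (f : Fin ℓ → ((Fin n → ℝ) → (Fin D → ℝ))),
        (∀ i, f i ∈ F) ∧ (∀ i, ContinuousOn (a i) B') ∧
        (∀ i, ∀ x ∈ B', 0 < a i x) ∧
        ∀ x ∈ B', g x = ∑ i, a i x • f i x := by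
  classical
  obtain ⟨W, hW, hWrep⟩ := hcone
  set g0 : Fin D → ℝ := g 0 with hg0
  obtain ⟨ε, hε, hball⟩ := Metric.mem_nhds_iff.mp hW
  set δ : ℝ := ε / 2 with hδdef
  have hδpos : 0 < δ := by positivity
  have hδne : δ ≠ 0 := hδpos.ne'
  set sg : Bool → ℝ := fun s => if s then 1 else -1 with hsg
  set ee : Fin D → (Fin D → ℝ) := fun j => Pi.single j 1 with hee
  -- the perturbed points lie in W
  have hpoint : ∀ (p : Fin D × Bool),
      g0 + (sg p.2 * δ) • ee p.1 ∈ W := by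
    rintro ⟨j, s⟩
    apply hball
    rw [Metric.mem_ball, dist_eq_norm]
    have h1 : g0 + (sg s * δ) • ee j - g0 = (sg s * δ) • ee j := by
      abel
    rw [h1]
    rw [pi_norm_lt_iff hε]
    intro k
    rcases eq_or_ne k j with rfl | hkj
    · simp only [hee, Pi.smul_apply, Pi.single_eq_same, smul_eq_mul, mul_one,
        Real.norm_eq_abs, abs_mul]
      have hsgabs : |sg s| = 1 := by cases s <;> simp [hsg]
      rw [hsgabs, one_mul, abs_of_pos hδpos, hδdef]
      linarith
    · simp [hee, Pi.single_eq_of_ne hkj, hε]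
  -- choose representations
  have hrep : ∀ p : Fin D × Bool,
      ∃ (k : ℕ) (f : Fin k → ((Fin n → ℝ) → (Fin D → ℝ))) (α : Fin k → ℝ),
        (∀ i, f i ∈ F) ∧ (∀ i, 0 < α i) ∧
        g0 + (sg p.2 * δ) • ee p.1 = ∑ i, α i • f i 0 :=
    fun p => hWrep _ (hpoint p)
  choose K ff αα hffF hααpos hffrep using hrep
  set ι := (Σ p : Fin D × Bool, Fin (K p)) with hι
  set d : ℝ := (D : ℝ) with hd
  set m : ℝ := δ / d with hm
  set cc : (Fin D × Bool) → (Fin D → ℝ) → ℝ :=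
    fun p z => (m + sg p.2 * (z p.1 - g0 p.1)) / (2 * δ) with hcc
  set lin : (Fin D × Bool) → Fin D → ℝ :=
    fun p k => if k = p.1 then sg p.2 / (2 * δ) else 0 with hlin
  set cst : (Fin D × Bool) → ℝ := fun p => (m - sg p.2 * g0 p.1) / (2 * δ) with hcst
  have hcc_affine : ∀ p z, cc p z = (∑ k, lin p k * z k) + cst p := by
    intro p z
    have : (∑ k, lin p k * z k) = sg p.2 / (2 * δ) * z p.1 := by
      rw [hlin]
      simp only [ite_mul, zero_mul]
      exact (Finset.sum_ite_eq' Finset.univ p.1 (fun k => sg p.2 / (2 * δ) * z k)).trans (if_pos (Finset.mem_univ _))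
    rw [this, hcc, hcst]
    field_simp
    ring
  -- the key pointwise identity at 0
  have key : ∀ (z : Fin D → ℝ) (k : Fin D),
      ∑ t : ι, (αα t.1 t.2 * cc t.1 z) * ff t.1 t.2 0 k = z k := by
    intro z k
    have hDpos : 0 < D := k.pos
    have hdne : d ≠ 0 := by
      rw [hd]; exact_mod_cast hDpos.ne'
    rw [← Finset.univ_sigma_univ, Finset.sum_sigma]
    have hblock : ∀ p : Fin D × Bool,
        ∑ i : Fin (K p), (αα p i * cc p z) * ff p i 0 k
          = cc p z * (g0 k + (sg p.2 * δ) * ee p.1 k) := by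
      intro p
      have h2 := congrFun (hffrep p) k
      simp only [Finset.sum_apply, Pi.add_apply, Pi.smul_apply, smul_eq_mul] at h2
      calc ∑ i : Fin (K p), (αα p i * cc p z) * ff p i 0 k
          = cc p z * ∑ i : Fin (K p), αα p i * ff p i 0 k := by
            rw [Finset.mul_sum]; exact Finset.sum_congr rfl fun i _ => by ring
        _ = cc p z * (g0 k + (sg p.2 * δ) * ee p.1 k) := by rw [← h2]
    rw [Finset.sum_congr rfl fun p _ => hblock p]
    rw [Fintype.sum_prod_type]
    have hstep : ∀ j : Fin D,
        ∑ s : Bool, cc (j, s) z * (g0 k + (sg s * δ) * ee j k)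
          = (m / δ) * g0 k + (if k = j then z j - g0 j else 0) := by
      intro j
      rw [Fintype.sum_bool]
      rcases eq_or_ne k j with rfl | hkj
      · simp only [hee, Pi.single_eq_same, hcc, hsg, if_true, if_false, ↓reduceIte, Bool.false_eq_true]
        field_simp
        ring
      · simp only [hee, Pi.single_eq_of_ne hkj, hcc, hsg, if_neg hkj, ↓reduceIte, Bool.false_eq_true]
        field_simp
        ring
    rw [Finset.sum_congr rfl fun j _ => hstep j, Finset.sum_add_distrib,
      Finset.sum_const, Finset.sum_ite_eq Finset.univ k (fun j => z j - g0 j)]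
    simp only [Finset.card_univ, Fintype.card_fin, if_pos (Finset.mem_univ k), nsmul_eq_mul]
    have hd1 : d * (m / δ) = 1 := by rw [hm]; field_simp
    linear_combination (g0 k) * hd1
  -- the matrix and constant part
  set M : (Fin n → ℝ) → Matrix (Fin D) (Fin D) ℝ :=
    fun x => Matrix.of fun k j => ∑ t : ι, αα t.1 t.2 * lin t.1 j * ff t.1 t.2 x k with hM
  set w : (Fin n → ℝ) → (Fin D → ℝ) :=
    fun x k => ∑ t : ι, αα t.1 t.2 * cst t.1 * ff t.1 t.2 x k with hw
  have affine : ∀ (x : Fin n → ℝ) (z : Fin D → ℝ) (k : Fin D),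
      ∑ t : ι, (αα t.1 t.2 * cc t.1 z) * ff t.1 t.2 x k
        = (∑ j, M x k j * z j) + w x k := by
    intro x z k
    have hterm : ∀ t : ι, (αα t.1 t.2 * cc t.1 z) * ff t.1 t.2 x k
        = (∑ j, (αα t.1 t.2 * lin t.1 j * ff t.1 t.2 x k) * z j)
          + αα t.1 t.2 * cst t.1 * ff t.1 t.2 x k := by
      intro t
      rw [hcc_affine, mul_add, add_mul, Finset.mul_sum, Finset.sum_mul]
      congr 1
      exact Finset.sum_congr rfl fun j _ => by ring
    rw [Finset.sum_congr rfl fun t _ => hterm t, Finset.sum_add_distrib, Finset.sum_comm]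
    congr 1
    exact Finset.sum_congr rfl fun j _ => by rw [← Finset.sum_mul]; rfl
  have keyMw : ∀ (z : Fin D → ℝ) (k : Fin D), (∑ j, M 0 k j * z j) + w 0 k = z k :=
    fun z k => (affine 0 z k).symm.trans (key z k)
  have hw0 : w 0 = 0 := by
    funext k
    have := keyMw 0 k
    simpa using this
  have hM0 : M 0 = 1 := by
    ext k j
    have := keyMw (Pi.single j 1) k
    rw [hw0] at this
    simp only [Pi.zero_apply, add_zero] at this
    have h2 : (∑ j', M 0 k j' * ee j j') = M 0 k j := by
      simp_rw [hee, Pi.single_apply, mul_ite, mul_one, mul_zero]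
      exact (Finset.sum_ite_eq' Finset.univ j (fun j' => M 0 k j')).trans (if_pos (Finset.mem_univ _))
    rw [h2] at this
    rw [this, Matrix.one_apply, Pi.single_apply]
  -- continuity setup
  set U := interior B with hU
  have hUopen : IsOpen U := isOpen_interior
  have hU0 : (0 : Fin n → ℝ) ∈ U := mem_interior_iff_mem_nhds.2 hB
  have hUB : U ⊆ B := interior_subset
  have contffk : ∀ (t : ι) (k : Fin D), ContinuousOn (fun x => ff t.1 t.2 x k) U :=
    fun t k => (continuous_apply k).comp_continuousOn ((hF _ (hffF t.1 t.2)).mono hUB)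
  have contM : ContinuousOn M U := by
    refine continuousOn_pi.2 ?_; intro k
    rw [continuousOn_pi]; intro j
    exact continuousOn_finset_sum Finset.univ fun t _ => continuousOn_const.mul (contffk t k)
  have contw : ContinuousOn w U := by
    rw [continuousOn_pi]; intro k
    exact continuousOn_finset_sum Finset.univ fun t _ => continuousOn_const.mul (contffk t k)
  have contdet : ContinuousOn (fun x => (M x).det) U :=
    (continuous_id.matrix_det).comp_continuousOn contM
  set S := U ∩ (fun x => (M x).det) ⁻¹' {(0:ℝ)}ᶜ with hS
  have hSopen : IsOpen S := contdet.isOpen_inter_preimage hUopen isOpen_compl_singleton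
  have hSU : S ⊆ U := Set.inter_subset_left
  have hdetS : ∀ x ∈ S, (M x).det ≠ 0 := fun x hx => hx.2
  have h0S : (0 : Fin n → ℝ) ∈ S := ⟨hU0, by simp [hM0]⟩
  have contMinv : ContinuousOn (fun x => (M x)⁻¹) S := by
    have h1 : ContinuousOn (fun x => ((M x).det)⁻¹ • (M x).adjugate) S :=
      ((contdet.mono hSU).inv₀ hdetS).smul
        ((continuous_id.matrix_adjugate).comp_continuousOn (contM.mono hSU))
    refine h1.congr fun x hx => ?_
    rw [Matrix.inv_def, Ring.inverse_eq_inv']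
  set zf : (Fin n → ℝ) → (Fin D → ℝ) := fun x => (M x)⁻¹.mulVec (g x - w x) with hzf
  have contzf : ContinuousOn zf S := by
    rw [continuousOn_pi]; intro k
    have : ∀ x, zf x k = ∑ j, (M x)⁻¹ k j * (g x j - w x j) := fun x => rfl
    simp only [this]
    refine continuousOn_finset_sum Finset.univ fun j _ => ContinuousOn.mul ?_ ?_
    · exact ((continuous_apply j).comp (continuous_apply k)).comp_continuousOn contMinv
    · exact (((continuous_apply j).comp_continuousOn ((hg.mono hUB).mono hSU)).sub
        ((continuous_apply j).comp_continuousOn ((contw.mono hSU))))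
  have hz0 : zf 0 = g0 := by
    rw [hzf]
    simp only [hM0, hw0, inv_one, sub_zero, Matrix.one_mulVec]
    exact hg0.symm
  set ρ : ℝ := if D = 0 then 1 else m with hρdef
  have hρpos : 0 < ρ := by
    rw [hρdef]
    split_ifs with h
    · norm_num
    · rw [hm]
      apply div_pos hδpos
      rw [hd]
      exact_mod_cast Nat.pos_of_ne_zero h
  set B' := S ∩ zf ⁻¹' Metric.ball g0 ρ with hB'
  have hB'open : IsOpen B' := contzf.isOpen_inter_preimage hSopen Metric.isOpen_ball
  have h0B' : (0 : Fin n → ℝ) ∈ B' := ⟨h0S, by simp [hz0, Metric.mem_ball, hρpos]⟩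
  have hB'B : B' ⊆ B := fun x hx => hUB (hSU hx.1)
  have hB'S : B' ⊆ S := Set.inter_subset_left
  -- the final data
  set ℓ := Fintype.card ι with hℓ
  set e : Fin ℓ ≃ ι := (Fintype.equivFin ι).symm with he
  refine ⟨B', hB'open, h0B', hB'B, ℓ,
    fun i x => αα (e i).1 (e i).2 * cc (e i).1 (zf x),
    fun i => ff (e i).1 (e i).2,
    fun i => hffF _ _, ?_, ?_, ?_⟩
  · -- continuity of coefficients
    intro i
    refine continuousOn_const.mul ?_
    have hcccont : Continuous (cc (e i).1) := by
      rw [hcc]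
      exact (continuous_const.add (continuous_const.mul
        ((continuous_apply _).sub continuous_const))).div_const _
    exact hcccont.comp_continuousOn (contzf.mono hB'S)
  · -- positivity
    intro i x hx
    refine mul_pos (hααpos _ _) ?_
    rw [hcc]
    have hDpos : 0 < D := (e i).1.1.pos
    have hρm : ρ = m := by rw [hρdef, if_neg hDpos.ne']
    have hmpos : 0 < m := by
      rw [hm]; apply div_pos hδpos; rw [hd]; exact_mod_cast hDpos
    have hdist : dist (zf x) g0 < m := by
      have := hx.2
      rw [Set.mem_preimage, Metric.mem_ball, hρm] at this
      exact this
    have habs : |zf x (e i).1.1 - g0 (e i).1.1| < m := by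
      calc |zf x (e i).1.1 - g0 (e i).1.1| = dist (zf x (e i).1.1) (g0 (e i).1.1) := (Real.dist_eq _ _).symm
        _ ≤ dist (zf x) g0 := dist_le_pi_dist _ _ _
        _ < m := hdist
    have hsgabs : |sg (e i).1.2| = 1 := by cases (e i).1.2 <;> simp [hsg]
    have : -m < sg (e i).1.2 * (zf x (e i).1.1 - g0 (e i).1.1) := by
      have h1 : |sg (e i).1.2 * (zf x (e i).1.1 - g0 (e i).1.1)| < m := by
        rw [abs_mul, hsgabs, one_mul]; exact habs
      linarith [neg_abs_le (sg (e i).1.2 * (zf x (e i).1.1 - g0 (e i).1.1)), h1]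
    apply div_pos (by linarith) (by linarith)
  · -- the representation identity
    intro x hx
    have hxS : x ∈ S := hB'S hx
    funext k
    rw [Finset.sum_apply]
    simp only [Pi.smul_apply, smul_eq_mul]
    rw [Equiv.sum_comp e (fun t : ι => (αα t.1 t.2 * cc t.1 (zf x)) * ff t.1 t.2 x k)]
    rw [affine x (zf x) k]
    have hMz : (M x).mulVec (zf x) = g x - w x := by
      rw [hzf, Matrix.mulVec_mulVec, Matrix.mul_nonsing_inv _ (isUnit_iff_ne_zero.2 (hdetS x hxS)),
        Matrix.one_mulVec]
    have h2 : (∑ j, M x k j * zf x j) = (M x).mulVec (zf x) k := rfl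
    rw [h2, hMz]
    simp
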